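/- Let m̃, n, γ be positive integers with γ | gcd(2m̃, 2n), and suppose for every prime p | γ the existence conditions hold (so a primitive vector of square 2n and divisibility γ exists in Λ = Λ₀ ⊕ Zδ, δ² = −2m̃, Λ₀ even unimodular with three hyperbolic planes). Then the number of residues b modulo γ with gcd(b, γ) = 1 and γ² | b²m̃ + n equals ∏_{p | γ} M_p, where for odd p with β = v_p(γ), α = min(v_p(m̃), v_p(n)): M_p = (p−1)p^{β−1} if β ≤ α/2 and M_p = 2p^{α−β} if β > α/2; and M_2 = 2^{β−1} if β ≤ α/2 + 1 and M_2 = 2^{α+2−β} if β > α/2 + 1 (β = v_2(γ), α = min(v_2(m̃), v_2(n))). -/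
import Mathlib
open Finset

lemma periodic_iter (M : ℕ) (P : ℕ → Prop) (hP : ∀ b, P (b + M) ↔ P b) :
    ∀ d b, P (d * M + b) ↔ P b := by
  intro d
  induction d with
  | zero => simp
  | succ e ihe =>
    intro b
    have : (e + 1) * M + b = (e * M + b) + M := by ring
    rw [this, hP, ihe]

lemma count_periodic (M : ℕ) (P : ℕ → Prop) [DecidablePred P]
    (hP : ∀ b, P (b + M) ↔ P b) :
    ∀ d, ((Finset.range (d * M)).filter P).card = d * ((Finset.range M).filter P).card := by
  intro d
  induction d with
  | zero => simp
  | succ d ih =>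
    have h1 : (d + 1) * M = d * M + M := by ring
    rw [h1, Finset.range_add, Finset.filter_union, Finset.card_union_of_disjoint, ih,
      Finset.filter_map, Finset.card_map]
    · have : Finset.filter (P ∘ (addLeftEmbedding (d * M))) (range M)
          = Finset.filter P (range M) := by
        apply Finset.filter_congr
        intro x _
        simp only [Function.comp, addLeftEmbedding_apply, periodic_iter M P hP d x]
      rw [this]; ring
    · rw [Finset.disjoint_left]
      intro x hx hx2
      simp only [Finset.mem_filter, Finset.mem_range, Finset.mem_map,
        addLeftEmbedding_apply] at hx hx2
      obtain ⟨⟨y, hy, rfl⟩, -⟩ := hx2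
      omega

def cnt (mt n γ : ℕ) : ℕ :=
  ((Finset.range γ).filter
    (fun b : ℕ => Nat.gcd b γ = 1 ∧ (γ : ℤ) ^ 2 ∣ (b : ℤ) ^ 2 * mt + n)).card

lemma cnt_eq_totient (mt n γ : ℕ)
    (h : ∀ b : ℕ, (γ : ℤ) ^ 2 ∣ (b : ℤ) ^ 2 * mt + n) :
    cnt mt n γ = Nat.totient γ := by
  unfold cnt
  rw [Nat.totient]
  congr 1
  apply Finset.filter_congr
  intro b _
  simp only [h b, and_true]
  rw [Nat.Coprime, Nat.gcd_comm]

lemma sq_cong (Mz s t m n : ℤ) (h : Mz ∣ s - t) :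
    (Mz ∣ s ^ 2 * m + n ↔ Mz ∣ t ^ 2 * m + n) := by
  have key : Mz ∣ (s ^ 2 * m + n) - (t ^ 2 * m + n) := by
    have : (s ^ 2 * m + n) - (t ^ 2 * m + n) = (s - t) * ((s + t) * m) := by ring
    rw [this]; exact Dvd.dvd.mul_right h _
  constructor
  · intro h1
    have h2 := dvd_sub h1 key
    have e : (s ^ 2 * m + n) - ((s ^ 2 * m + n) - (t ^ 2 * m + n)) = t ^ 2 * m + n := by ring
    rwa [e] at h2
  · intro h1
    have h2 := dvd_add h1 key
    have e : (t ^ 2 * m + n) + ((s ^ 2 * m + n) - (t ^ 2 * m + n)) = s ^ 2 * m + n := by ring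
    rwa [e] at h2

lemma pair_count (M : ℕ) (D : ℕ → Prop) [DecidablePred D]
    (r : ℕ) (hr : r < M) (hr0 : 0 < r) (hne : 2 * r ≠ M)
    (hrD : D r) (hrD' : D (M - r))
    (huniq : ∀ s, s < M → D s → s = r ∨ s = M - r) :
    ((Finset.range M).filter D).card = 2 := by
  have hset : (Finset.range M).filter D = {r, M - r} := by
    ext b
    simp only [Finset.mem_filter, Finset.mem_range, Finset.mem_insert, Finset.mem_singleton]
    constructor
    · rintro ⟨hb, hD⟩; exact huniq b hb hD
    · rintro (rfl | rfl)
      · exact ⟨hr, hrD⟩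
      · exact ⟨by omega, hrD'⟩
  rw [hset, Finset.card_pair (by omega)]

lemma two_roots_odd (p k m1 n1 : ℕ) (hp : p.Prime) (hp2 : p ≠ 2) (hk : 0 < k)
    (hm : ¬ p ∣ m1) (hn : ¬ p ∣ n1) (hex : ∃ x : ℤ, (p:ℤ)^k ∣ x^2 * m1 + n1) :
    ((Finset.range (p^k)).filter
      (fun b : ℕ => (p:ℤ)^k ∣ (b:ℤ)^2 * m1 + n1)).card = 2 := by
  obtain ⟨x, hxd⟩ := hex
  have hpz : Prime (p : ℤ) := Int.prime_iff_natAbs_prime.mpr (by simpa using hp)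
  have hMcast : (((p^k : ℕ)) : ℤ) = (p:ℤ)^k := by push_cast; ring
  have hMzpos : (0:ℤ) < (p:ℤ)^k := pow_pos (by exact_mod_cast hp.pos) k
  set r : ℕ := (x % ((p:ℤ)^k)).toNat with hrdef
  have hrz : (r : ℤ) = x % ((p:ℤ)^k) :=
    Int.toNat_of_nonneg (Int.emod_nonneg x (ne_of_gt hMzpos))
  have hrx : (p:ℤ)^k ∣ x - (r:ℤ) := by
    rw [hrz]; exact ⟨x / ((p:ℤ)^k), by rw [Int.emod_def]; ring⟩
  have hrD : (p:ℤ)^k ∣ (r:ℤ)^2 * m1 + n1 := (sq_cong _ x r _ _ hrx).mp hxd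
  have hrMz : (r:ℤ) < (p:ℤ)^k := by rw [hrz]; exact Int.emod_lt_of_pos x hMzpos
  have hrM : r < p ^ k := by
    have : (r:ℤ) < ((p^k : ℕ) : ℤ) := by rw [hMcast]; exact hrMz
    exact_mod_cast this
  have hnod : ∀ s : ℕ, (p:ℤ)^k ∣ (s:ℤ)^2 * m1 + n1 → ¬ p ∣ s := by
    intro s hs hps
    apply hn
    have h1 : (p:ℤ) ∣ (s:ℤ)^2 * m1 := by
      have : (p:ℤ) ∣ (s:ℤ) := Int.natCast_dvd_natCast.mpr hps
      exact Dvd.dvd.mul_right (dvd_pow this (by norm_num)) _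
    have h2 : (p:ℤ) ∣ (s:ℤ)^2 * m1 + n1 := dvd_trans (dvd_pow_self _ hk.ne') hs
    have h3 : (p:ℤ) ∣ (n1:ℤ) := by
      have h4 := dvd_sub h2 h1
      have e : ((s:ℤ)^2 * m1 + n1) - (s:ℤ)^2 * m1 = (n1:ℤ) := by ring
      rwa [e] at h4
    exact_mod_cast h3
  have hr0 : 0 < r := by
    rcases Nat.eq_zero_or_pos r with h | h
    · exfalso; exact hnod r hrD (h ▸ dvd_zero p)
    · exact h
  have hpr : ¬ p ∣ r := hnod r hrD
  have hne : 2 * r ≠ p ^ k := by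
    intro h
    have hh : p ∣ 2 * r := h ▸ dvd_pow_self p hk.ne'
    rcases (Nat.Prime.dvd_mul hp).mp hh with h' | h'
    · exact hp2 ((Nat.prime_dvd_prime_iff_eq hp Nat.prime_two).mp h')
    · exact hpr h'
  have hrD' : (p:ℤ)^k ∣ ((p^k - r : ℕ):ℤ)^2 * m1 + n1 := by
    have hcast : ((p^k - r : ℕ):ℤ) = (p:ℤ)^k - r := by
      rw [Nat.cast_sub hrM.le, hMcast]
    have hcg : (p:ℤ)^k ∣ ((p^k - r : ℕ):ℤ) - (-(r:ℤ)) := by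
      rw [hcast]; exact ⟨1, by ring⟩
    have h5 := (sq_cong _ _ (-(r:ℤ)) (m1:ℤ) (n1:ℤ) hcg).mpr (by simpa using hrD)
    exact h5
  apply pair_count _ _ r hrM hr0 hne hrD hrD'
  intro s hs hsD
  have hsz : (s:ℤ) < (p:ℤ)^k := by
    have : ((s:ℕ):ℤ) < ((p^k:ℕ):ℤ) := by exact_mod_cast hs
    rwa [hMcast] at this
  have hdiff2 : (p:ℤ)^k ∣ ((s:ℤ) - r) * ((s:ℤ) + r) := by
    have h1 := dvd_sub hsD hrD
    have e : ((s:ℤ)^2 * m1 + n1) - ((r:ℤ)^2 * m1 + n1)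
        = (((s:ℤ) - r) * ((s:ℤ) + r)) * m1 := by ring
    rw [e] at h1
    have hcopm : IsCoprime ((p:ℤ)^k) (m1:ℤ) := by
      have h6 : IsCoprime ((p:ℕ):ℤ) ((m1:ℕ):ℤ) :=
        Nat.isCoprime_iff_coprime.mpr ((Nat.Prime.coprime_iff_not_dvd hp).mpr hm)
      exact h6.pow_left
    exact hcopm.dvd_of_dvd_mul_right h1
  by_cases hc : (p:ℤ) ∣ (s:ℤ) - r
  · have hnsr : ¬ (p:ℤ) ∣ (s:ℤ) + r := by
      intro h
      have h2r : (p:ℤ) ∣ 2 * r := by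
        have h7 := dvd_sub h hc
        have e : ((s:ℤ) + r) - ((s:ℤ) - r) = 2 * r := by ring
        rwa [e] at h7
      rcases hpz.dvd_mul.mp h2r with h' | h'
      · have h8 : (p:ℕ) ∣ 2 := by exact_mod_cast h'
        exact hp2 ((Nat.prime_dvd_prime_iff_eq hp Nat.prime_two).mp h8)
      · exact hpr (by exact_mod_cast h')
    have hcop : IsCoprime ((p:ℤ)^k) ((s:ℤ) + r) :=
      (((Prime.coprime_iff_not_dvd hpz).mpr hnsr)).pow_left
    have hdvd1 : (p:ℤ)^k ∣ (s:ℤ) - r := hcop.dvd_of_dvd_mul_right hdiff2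
    left
    have habs : (s:ℤ) = r := by
      have h1 : -((p:ℤ)^k) < (s:ℤ) - r := by
        have h9 : (0:ℤ) ≤ (r:ℤ) := Int.natCast_nonneg r
        have h10 : (0:ℤ) ≤ (s:ℤ) := Int.natCast_nonneg s
        omega
      rcases hdvd1 with ⟨c, hcc⟩
      rcases lt_trichotomy c 0 with h' | h' | h'
      · nlinarith
      · rw [h', mul_zero] at hcc; omega
      · nlinarith
    exact_mod_cast habs
  · have hcop : IsCoprime ((p:ℤ)^k) ((s:ℤ) - r) :=
      (((Prime.coprime_iff_not_dvd hpz).mpr hc)).pow_left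
    have hdvd1 : (p:ℤ)^k ∣ (s:ℤ) + r := hcop.dvd_of_dvd_mul_left hdiff2
    right
    have habs : (s:ℤ) + r = (p:ℤ)^k := by
      have h1 : (0:ℤ) < (s:ℤ) + r := by
        have h9 : (0:ℤ) < (r:ℤ) := by exact_mod_cast hr0
        have h10 : (0:ℤ) ≤ (s:ℤ) := Int.natCast_nonneg s
        omega
      have h2 : (s:ℤ) + r < 2 * (p:ℤ)^k := by omega
      rcases hdvd1 with ⟨c, hcc⟩
      rcases lt_trichotomy c 1 with h' | h' | h'
      · nlinarith
      · rw [h', mul_one] at hcc; omega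
      · nlinarith
    have h11 : (((s + r : ℕ)):ℤ) = ((p^k : ℕ):ℤ) := by rw [hMcast]; push_cast; omega
    have h12 : s + r = p ^ k := by exact_mod_cast h11
    omega
lemma sq_cong2 (k : ℕ) (s t m n : ℤ) (heven : (2:ℤ) ∣ s + t)
    (h : (2:ℤ)^(k-1) ∣ s - t) (hk : 1 ≤ k) :
    ((2:ℤ)^k ∣ s ^ 2 * m + n ↔ (2:ℤ)^k ∣ t ^ 2 * m + n) := by
  obtain ⟨u, hu⟩ := h
  obtain ⟨v, hv⟩ := heven
  have key : (2:ℤ)^k ∣ (s ^ 2 * m + n) - (t ^ 2 * m + n) := by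
    have e : (s ^ 2 * m + n) - (t ^ 2 * m + n) = (s - t) * ((s + t) * m) := by ring
    rw [e, hu, hv]
    have e2 : (2:ℤ)^(k-1) * u * (2 * v * m) = (2:ℤ)^(k-1) * 2 * (u * v * m) := by ring
    rw [e2]
    have e3 : (2:ℤ)^(k-1) * 2 = 2^k := by
      rw [← pow_succ]; congr 1; omega
    rw [e3]
    exact Dvd.dvd.mul_right dvd_rfl _
  constructor
  · intro h1
    have h2 := dvd_sub h1 key
    have e : (s ^ 2 * m + n) - ((s ^ 2 * m + n) - (t ^ 2 * m + n)) = t ^ 2 * m + n := by ring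
    rwa [e] at h2
  · intro h1
    have h2 := dvd_add h1 key
    have e : (t ^ 2 * m + n) + ((s ^ 2 * m + n) - (t ^ 2 * m + n)) = s ^ 2 * m + n := by ring
    rwa [e] at h2

lemma two_roots_two (k m1 n1 : ℕ) (hk : 3 ≤ k)
    (hm : ¬ 2 ∣ m1) (hn : ¬ 2 ∣ n1) (hex : ∃ x : ℤ, (2:ℤ)^k ∣ x^2 * m1 + n1) :
    ((Finset.range (2^(k-1))).filter
      (fun b : ℕ => (2:ℤ)^k ∣ (b:ℤ)^2 * m1 + n1)).card = 2 := by
  obtain ⟨x, hxd⟩ := hex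
  have hMcast : (((2^(k-1) : ℕ)) : ℤ) = (2:ℤ)^(k-1) := by push_cast; ring
  have hMzpos : (0:ℤ) < (2:ℤ)^(k-1) := by positivity
  -- any integer solution is odd
  have hnodz : ∀ s : ℤ, (2:ℤ)^k ∣ s^2 * m1 + n1 → ¬ (2:ℤ) ∣ s := by
    intro s hs h2s
    apply hn
    have h1 : (2:ℤ) ∣ s^2 * m1 := Dvd.dvd.mul_right (dvd_pow h2s (by norm_num)) _
    have h2 : (2:ℤ) ∣ s^2 * m1 + n1 := dvd_trans (dvd_pow_self _ (by omega)) hs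
    have h3 : (2:ℤ) ∣ (n1:ℤ) := by
      have h4 := dvd_sub h2 h1
      have e : (s^2 * m1 + n1) - s^2 * m1 = (n1:ℤ) := by ring
      rwa [e] at h4
    exact_mod_cast h3
  have hxodd : ¬ (2:ℤ) ∣ x := hnodz x hxd
  set r : ℕ := (x % ((2:ℤ)^(k-1))).toNat with hrdef
  have hrz : (r : ℤ) = x % ((2:ℤ)^(k-1)) :=
    Int.toNat_of_nonneg (Int.emod_nonneg x (ne_of_gt hMzpos))
  have hrx : (2:ℤ)^(k-1) ∣ (r:ℤ) - x := by
    rw [hrz]; exact ⟨-(x / ((2:ℤ)^(k-1))), by rw [Int.emod_def]; ring⟩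
  have hrodd : ¬ (2:ℤ) ∣ (r:ℤ) := by
    intro h
    apply hxodd
    have h2 : (2:ℤ) ∣ (r:ℤ) - x := dvd_trans (dvd_pow_self 2 (by omega : k - 1 ≠ 0)) hrx
    have := dvd_sub h h2
    have e : (r:ℤ) - ((r:ℤ) - x) = x := by ring
    rwa [e] at this
  have hrD : (2:ℤ)^k ∣ (r:ℤ)^2 * m1 + n1 := by
    refine (sq_cong2 k (r:ℤ) x _ _ ?_ hrx (by omega)).mpr hxd
    rcases Int.even_or_odd (r:ℤ) with h | h
    · exact absurd h.two_dvd hrodd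
    · rcases Int.even_or_odd x with h' | h'
      · exact absurd h'.two_dvd hxodd
      · exact (h.add_odd h').two_dvd
  have hrMz : (r:ℤ) < (2:ℤ)^(k-1) := by rw [hrz]; exact Int.emod_lt_of_pos x hMzpos
  have hrM : r < 2 ^ (k-1) := by
    have : (r:ℤ) < ((2^(k-1) : ℕ) : ℤ) := by rw [hMcast]; exact hrMz
    exact_mod_cast this
  have hroddn : r % 2 = 1 := by
    rcases Nat.even_or_odd r with h | h
    · exact absurd (Int.natCast_dvd_natCast.mpr h.two_dvd) hrodd
    · omega
  have hr0 : 0 < r := by omega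
  have hne : 2 * r ≠ 2 ^ (k-1) := by
    intro h
    have : r = 2 ^ (k - 2) := by
      have e : 2 ^ (k-1) = 2 * 2 ^ (k-2) := by
        calc 2 ^ (k-1) = 2^((k-2)+1) := by congr 1; omega
          _ = 2 * 2^(k-2) := by rw [pow_succ]; ring
      omega
    have : 2 ∣ r := by
      rw [this]; exact dvd_pow_self 2 (by omega : k - 2 ≠ 0)
    omega
  have hrD' : (2:ℤ)^k ∣ ((2^(k-1) - r : ℕ):ℤ)^2 * m1 + n1 := by
    have hcast : ((2^(k-1) - r : ℕ):ℤ) = (2:ℤ)^(k-1) - r := by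
      rw [Nat.cast_sub hrM.le, hMcast]
    refine (sq_cong2 k _ (-(r:ℤ)) (m1:ℤ) (n1:ℤ) ?_ ?_ (by omega)).mpr (by simpa using hrD)
    · rw [hcast]
      have e : (2:ℤ)^(k-1) - r + -(r:ℤ) = 2^(k-1) - 2 * r := by ring
      rw [e]
      have : (2:ℤ) ∣ 2^(k-1) := dvd_pow_self 2 (by omega : k - 1 ≠ 0)
      exact dvd_sub this ⟨r, rfl⟩
    · rw [hcast]; exact ⟨1, by ring⟩
  apply pair_count _ _ r hrM hr0 hne hrD hrD'
  intro s hs hsD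
  have hsodd : ¬ (2:ℤ) ∣ (s:ℤ) := hnodz s hsD
  have hsoddn : s % 2 = 1 := by
    rcases Nat.even_or_odd s with h | h
    · exact absurd (Int.natCast_dvd_natCast.mpr h.two_dvd) hsodd
    · omega
  have hsz : (s:ℤ) < (2:ℤ)^(k-1) := by
    have : ((s:ℕ):ℤ) < ((2^(k-1):ℕ):ℤ) := by exact_mod_cast hs
    rwa [hMcast] at this
  have hdiff2 : (2:ℤ)^k ∣ ((s:ℤ) - r) * ((s:ℤ) + r) := by
    have h1 := dvd_sub hsD hrD
    have e : ((s:ℤ)^2 * m1 + n1) - ((r:ℤ)^2 * m1 + n1)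
        = (((s:ℤ) - r) * ((s:ℤ) + r)) * m1 := by ring
    rw [e] at h1
    have hcopm : IsCoprime ((2:ℤ)^k) (m1:ℤ) := by
      have h6 : IsCoprime ((2:ℕ):ℤ) ((m1:ℕ):ℤ) :=
        Nat.isCoprime_iff_coprime.mpr ((Nat.Prime.coprime_iff_not_dvd Nat.prime_two).mpr hm)
      exact h6.pow_left
    exact hcopm.dvd_of_dvd_mul_right h1
  obtain ⟨u, hu⟩ : ∃ u : ℤ, (s:ℤ) - r = 2 * u := ⟨((s:ℤ) - r)/2, by omega⟩
  obtain ⟨v, hv⟩ : ∃ v : ℤ, (s:ℤ) + r = 2 * v := ⟨((s:ℤ) + r)/2, by omega⟩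
  have huv : 2 ∣ (u + v) - (s:ℤ) := by omega
  have honeodd : ¬ (2:ℤ) ∣ u ∨ ¬ (2:ℤ) ∣ v := by
    by_contra h
    push_neg at h
    obtain ⟨h1, h2⟩ := h
    have : (2:ℤ) ∣ (s:ℤ) := by omega
    exact hsodd this
  have hdvduv : (2:ℤ)^(k-2) ∣ u * v := by
    have e : ((s:ℤ) - r) * ((s:ℤ) + r) = 4 * (u * v) := by rw [hu, hv]; ring
    rw [e] at hdiff2
    have e2 : (2:ℤ)^k = 4 * 2^(k-2) := by
      calc (2:ℤ)^k = 2^((k-2)+2) := by congr 1; omega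
        _ = 4 * 2^(k-2) := by rw [pow_add]; ring
    rw [e2] at hdiff2
    exact (mul_dvd_mul_iff_left (by norm_num : (4:ℤ) ≠ 0)).mp hdiff2
  have hbig : (2:ℤ)^(k-1) ∣ (s:ℤ) - r ∨ (2:ℤ)^(k-1) ∣ (s:ℤ) + r := by
    have hsplit : ∀ w z : ℤ, w * z = u * v → ¬ (2:ℤ) ∣ z → (2:ℤ)^(k-2) ∣ u * v →
        (2:ℤ)^(k-2) ∣ w := by
      intro w z hwz hz hdvd
      have hcop : IsCoprime ((2:ℤ)^(k-2)) z :=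
        ((Prime.coprime_iff_not_dvd Int.prime_two).mpr hz).pow_left
      rw [← hwz] at hdvd
      exact hcop.dvd_of_dvd_mul_right hdvd
    rcases honeodd with h | h
    · -- u odd, so 2^(k-2) ∣ v
      right
      have : (2:ℤ)^(k-2) ∣ v := hsplit v u (mul_comm u v ▸ rfl) h hdvduv
      obtain ⟨c, hc⟩ := this
      refine ⟨c, ?_⟩
      rw [hv, hc]
      have e : (2:ℤ) * (2^(k-2) * c) = 2^(k-1) * c ↔ True := by
        constructor
        · intro; trivial
        · intro
          have e4 : (2:ℤ)^(k-1) = 2 * 2^(k-2) := by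
            calc (2:ℤ)^(k-1) = 2^((k-2)+1) := by congr 1; omega
              _ = 2 * 2^(k-2) := by rw [pow_succ]; ring
          rw [e4]; ring
      rw [← e.mpr trivial]
    · left
      have : (2:ℤ)^(k-2) ∣ u := hsplit u v rfl h hdvduv
      obtain ⟨c, hc⟩ := this
      refine ⟨c, ?_⟩
      rw [hu, hc]
      have e4 : (2:ℤ)^(k-1) = 2 * 2^(k-2) := by
        calc (2:ℤ)^(k-1) = 2^((k-2)+1) := by congr 1; omega
          _ = 2 * 2^(k-2) := by rw [pow_succ]; ring
      rw [e4]; ring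
  rcases hbig with hdvd1 | hdvd1
  · left
    have habs : (s:ℤ) = r := by
      rcases hdvd1 with ⟨c, hcc⟩
      have h9 : (0:ℤ) ≤ (r:ℤ) := Int.natCast_nonneg r
      have h10 : (0:ℤ) ≤ (s:ℤ) := Int.natCast_nonneg s
      rcases lt_trichotomy c 0 with h' | h' | h'
      · nlinarith
      · rw [h', mul_zero] at hcc; omega
      · nlinarith
    exact_mod_cast habs
  · right
    have habs : (s:ℤ) + r = (2:ℤ)^(k-1) := by
      rcases hdvd1 with ⟨c, hcc⟩
      have h9 : (0:ℤ) < (r:ℤ) := by exact_mod_cast hr0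
      have h10 : (0:ℤ) ≤ (s:ℤ) := Int.natCast_nonneg s
      rcases lt_trichotomy c 1 with h' | h' | h'
      · nlinarith
      · rw [h', mul_one] at hcc; omega
      · nlinarith
    have h11 : (((s + r : ℕ)):ℤ) = ((2^(k-1) : ℕ):ℤ) := by rw [hMcast]; push_cast; omega
    have h12 : s + r = 2 ^ (k-1) := by exact_mod_cast h11
    omega

lemma odd_sq_sub_one (z : ℤ) (hz : ¬ (2:ℤ) ∣ z) : (8:ℤ) ∣ z^2 - 1 := by
  obtain ⟨t, ht⟩ : ∃ t, z = 2*t + 1 := ⟨(z-1)/2, by omega⟩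
  have h2 : (2:ℤ) ∣ t * (t+1) := (Int.even_mul_succ_self t).two_dvd
  obtain ⟨w, hw⟩ := h2
  exact ⟨w, by subst ht; nlinarith [hw]⟩

lemma cnt_pp (mt n p β : ℕ) (hmt : 0 < mt) (hn : 0 < n) (hp : p.Prime) (hβ : 0 < β)
    (hd : p ^ β ∣ Nat.gcd (2 * mt) (2 * n))
    (hexp : ((mt.factorization p ≠ n.factorization p ∧
          2 * β ≤ min (mt.factorization p) (n.factorization p)) ∨
       (mt.factorization p = n.factorization p ∧
          (2 * β ≤ min (mt.factorization p) (n.factorization p) ∨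
           (2 * β > min (mt.factorization p) (n.factorization p) ∧
            ∃ x : ℤ,
              (p : ℤ) ^ (2 * β - min (mt.factorization p) (n.factorization p)) ∣
                x ^ 2 * ((mt / p ^ min (mt.factorization p) (n.factorization p) : ℕ) : ℤ)
                  + ((n / p ^ min (mt.factorization p) (n.factorization p) : ℕ) : ℤ)))))) :
    cnt mt n (p ^ β) =
      (if p = 2 then
        (if 2 * β ≤ min (mt.factorization 2) (n.factorization 2) + 2
          then 2 ^ (β - 1)
          else 2 ^ (min (mt.factorization 2) (n.factorization 2) + 2 - β))
       else
        (if 2 * β ≤ min (mt.factorization p) (n.factorization p)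
          then (p - 1) * p ^ (β - 1)
          else 2 * p ^ (min (mt.factorization p) (n.factorization p) - β))) := by
  have hp1 : 1 < p := hp.one_lt
  have hpαmt : p ^ (min (mt.factorization p) (n.factorization p)) ∣ mt :=
    dvd_trans (pow_dvd_pow p (min_le_left _ _)) (Nat.ordProj_dvd mt p)
  have hpαn : p ^ (min (mt.factorization p) (n.factorization p)) ∣ n :=
    dvd_trans (pow_dvd_pow p (min_le_right _ _)) (Nat.ordProj_dvd n p)
  set a := mt.factorization p with ha
  set c := n.factorization p with hc
  set α := min a c with hα
  set m1 := mt / p ^ α with hm1def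
  set n1 := n / p ^ α with hn1def
  have hm1 : p ^ α * m1 = mt := Nat.mul_div_cancel' hpαmt
  have hn1 : p ^ α * n1 = n := Nat.mul_div_cancel' hpαn
  have hmtz : (mt : ℤ) = (p:ℤ)^α * m1 := by exact_mod_cast (congrArg (Nat.cast : ℕ → ℤ) hm1).symm
  have hnz : (n : ℤ) = (p:ℤ)^α * n1 := by exact_mod_cast (congrArg (Nat.cast : ℕ → ℤ) hn1).symm
  have hdm : p ^ β ∣ 2 * mt := dvd_trans hd (Nat.gcd_dvd_left _ _)
  have hdn : p ^ β ∣ 2 * n := dvd_trans hd (Nat.gcd_dvd_right _ _)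
  have hγcast : ((p ^ β : ℕ) : ℤ) ^ 2 = (p:ℤ) ^ (2 * β) := by
    push_cast [← pow_mul]; ring
  have hcancel : ∀ b : ℕ, α ≤ 2 * β →
      (((p ^ β : ℕ) : ℤ) ^ 2 ∣ (b:ℤ)^2 * mt + n ↔
        (p:ℤ) ^ (2*β - α) ∣ (b:ℤ)^2 * m1 + n1) := by
    intro b hαβ
    rw [hγcast, hmtz, hnz]
    have e1 : (b:ℤ)^2 * ((p:ℤ)^α * m1) + (p:ℤ)^α * n1
        = (p:ℤ)^α * ((b:ℤ)^2 * m1 + n1) := by ring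
    rw [e1]
    have e2 : (p:ℤ)^(2*β) = (p:ℤ)^α * (p:ℤ)^(2*β - α) := by
      rw [← pow_add]; congr 1; omega
    rw [e2]
    exact mul_dvd_mul_iff_left (a := (p:ℤ)^α)
      (by positivity : (0:ℤ) < (p:ℤ)^α).ne'
  have hcop : ∀ b : ℕ, (Nat.gcd b (p ^ β) = 1 ↔ ¬ p ∣ b) := by
    intro b
    constructor
    · intro h hpb
      have h1 : p ∣ Nat.gcd b (p ^ β) := Nat.dvd_gcd hpb (dvd_pow_self p hβ.ne')
      rw [h] at h1
      exact hp.ne_one (Nat.dvd_one.mp h1)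
    · intro h
      exact (((Nat.Prime.coprime_iff_not_dvd hp).mpr h).symm).pow_right β
  by_cases hT : 2 * β ≤ α
  · -- trivial case: all b satisfy the divisibility
    have hall : ∀ b : ℕ, ((p^β : ℕ):ℤ)^2 ∣ (b:ℤ)^2 * mt + n := by
      intro b
      rw [hγcast]
      have h1 : (p:ℤ)^(2*β) ∣ (mt:ℤ) := by
        exact_mod_cast Int.natCast_dvd_natCast.mpr ((pow_dvd_pow p hT).trans hpαmt)
      have h2 : (p:ℤ)^(2*β) ∣ (n:ℤ) := by
        exact_mod_cast Int.natCast_dvd_natCast.mpr ((pow_dvd_pow p hT).trans hpαn)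
      exact dvd_add (Dvd.dvd.mul_left h1 _) h2
    rw [cnt_eq_totient _ _ _ hall, Nat.totient_prime_pow hp hβ]
    by_cases hp2 : p = 2
    · subst hp2
      rw [if_pos rfl, if_pos (by omega)]
      norm_num
    · rw [if_neg hp2, if_pos hT]; ring
  · -- nontrivial case
    have hac : a = c ∧ ∃ x : ℤ, (p:ℤ)^(2*β - α) ∣ x^2*m1+n1 := by
      rcases hexp with ⟨hne, h⟩ | ⟨heq, h⟩
      · omega
      · rcases h with h | ⟨h1, h2⟩
        · omega
        · exact ⟨heq, h2⟩
    obtain ⟨haceq, x, hx⟩ := hac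
    have hαa : α = a := by rw [hα, haceq, min_self]
    have hαc : α = c := by rw [hα, haceq, min_self]
    have hpm1 : ¬ p ∣ m1 := by
      rw [hm1def, hαa]; exact Nat.not_dvd_ordCompl hp hmt.ne'
    have hpn1 : ¬ p ∣ n1 := by
      rw [hn1def, hαc]; exact Nat.not_dvd_ordCompl hp hn.ne'
    set k := 2*β - α with hk
    have hk1 : 1 ≤ k := by omega
    have hcond : ∀ b : ℕ,
        ((Nat.gcd b (p^β) = 1 ∧ ((p^β:ℕ):ℤ)^2 ∣ (b:ℤ)^2*mt+n) ↔
          (p:ℤ)^k ∣ (b:ℤ)^2 * m1 + n1) := by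
      intro b
      rw [hcop b, hcancel b (by omega)]
      constructor
      · rintro ⟨h1, h2⟩; exact h2
      · intro h2
        refine ⟨?_, h2⟩
        intro hpb
        apply hpn1
        have hdb : (p:ℤ) ∣ (b:ℤ) := Int.natCast_dvd_natCast.mpr hpb
        have h3 : (p:ℤ) ∣ (b:ℤ)^2*m1 := Dvd.dvd.mul_right (dvd_pow hdb two_ne_zero) _
        have h4 : (p:ℤ) ∣ (b:ℤ)^2*m1 + n1 := dvd_trans (dvd_pow_self _ (by omega)) h2
        have h5 : (p:ℤ) ∣ (n1:ℤ) := by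
          have h6 := dvd_sub h4 h3
          have e : ((b:ℤ)^2*m1 + n1) - (b:ℤ)^2*m1 = (n1:ℤ) := by ring
          rwa [e] at h6
        exact_mod_cast h5
    have hcnt : cnt mt n (p^β) =
        ((range (p^β)).filter (fun b : ℕ => (p:ℤ)^k ∣ (b:ℤ)^2*m1+n1)).card := by
      unfold cnt
      congr 1
      apply Finset.filter_congr
      intro b _
      exact hcond b
    by_cases hp2 : p = 2
    · subst hp2
      -- p = 2
      have hβ1a : β - 1 ≤ a := by
        have h7 : 2 * 2^(β-1) ∣ 2 * mt := by
          have e : 2 * 2^(β-1) = 2^β := by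
            rw [← pow_succ']; congr 1; omega
          rw [e]; exact hdm
        have h8 : 2^(β-1) ∣ mt := (Nat.mul_dvd_mul_iff_left (by norm_num : 0 < 2)).mp h7
        exact (Nat.Prime.pow_dvd_iff_le_factorization hp hmt.ne').mp h8
      have hβ1c : β - 1 ≤ c := by
        have h7 : 2 * 2^(β-1) ∣ 2 * n := by
          have e : 2 * 2^(β-1) = 2^β := by
            rw [← pow_succ']; congr 1; omega
          rw [e]; exact hdn
        have h8 : 2^(β-1) ∣ n := (Nat.mul_dvd_mul_iff_left (by norm_num : 0 < 2)).mp h7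
        exact (Nat.Prime.pow_dvd_iff_le_factorization hp hn.ne').mp h8
      have hxodd : ¬ (2:ℤ) ∣ x := by
        intro h2x
        apply hpn1
        have h3 : (2:ℤ) ∣ x^2*m1 := Dvd.dvd.mul_right (dvd_pow h2x two_ne_zero) _
        have h4 : (2:ℤ) ∣ x^2*m1 + n1 := dvd_trans (dvd_pow_self _ (by omega)) hx
        have h5 : (2:ℤ) ∣ (n1:ℤ) := by
          have h6 := dvd_sub h4 h3
          have e : (x^2*m1 + n1) - x^2*m1 = (n1:ℤ) := by ring
          rwa [e] at h6
        exact_mod_cast h5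
      by_cases hk2 : k ≤ 2
      · -- all odd b work
        rw [if_pos rfl, if_pos (by omega)]
        have hall : ∀ b : ℕ, ¬ 2 ∣ b → (2:ℤ)^k ∣ (b:ℤ)^2 * m1 + n1 := by
          intro b hb
          have hbz : ¬ (2:ℤ) ∣ (b:ℤ) := by
            intro h; exact hb (by exact_mod_cast h)
          have h8 : (8:ℤ) ∣ (b:ℤ)^2 - x^2 := by
            have h1 := odd_sq_sub_one (b:ℤ) hbz
            have h2 := odd_sq_sub_one x hxodd
            have h3 := dvd_sub h1 h2
            have e : ((b:ℤ)^2 - 1) - (x^2 - 1) = (b:ℤ)^2 - x^2 := by ring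
            rwa [e] at h3
          have h9 : (2:ℤ)^k ∣ (b:ℤ)^2 - x^2 := by
            refine dvd_trans ?_ h8
            have : (2:ℤ)^k ∣ (2:ℤ)^3 := pow_dvd_pow 2 (by omega)
            simpa using this
          have h10 : (2:ℤ)^k ∣ ((b:ℤ)^2 - x^2) * m1 := Dvd.dvd.mul_right h9 _
          have h11 := dvd_add hx h10
          have e : (x^2*m1 + n1) + ((b:ℤ)^2 - x^2) * m1 = (b:ℤ)^2 * m1 + n1 := by ring
          rwa [e] at h11
        have : cnt mt n (2^β) = Nat.totient (2^β) := by
          unfold cnt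
          rw [Nat.totient]
          congr 1
          apply Finset.filter_congr
          intro b _
          constructor
          · rintro ⟨h1, _⟩
            rw [Nat.Coprime, Nat.gcd_comm]; exact h1
          · intro h1
            have h1' : Nat.gcd b (2^β) = 1 := by rwa [Nat.Coprime, Nat.gcd_comm] at h1
            refine ⟨h1', ?_⟩
            rw [hcancel b (by omega)]
            exact hall b ((hcop b).mp h1')
        rw [this, Nat.totient_prime_pow hp hβ]
        norm_num
      · -- k ≥ 3
        rw [if_pos rfl, if_neg (by omega)]
        have hk3 : 3 ≤ k := by omega
        have hkβ1 : k - 1 ≤ β := by omega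
        have hper : ∀ b : ℕ,
            ((2:ℤ)^k ∣ ((b + 2^(k-1) : ℕ):ℤ)^2*m1+n1 ↔ (2:ℤ)^k ∣ (b:ℤ)^2*m1+n1) := by
          intro b
          apply sq_cong2 k _ _ _ _ ?_ ?_ (by omega)
          · push_cast
            have e : ((b:ℤ) + 2^(k-1)) + b = 2 * b + 2^(k-1) := by ring
            rw [e]
            refine dvd_add ⟨b, rfl⟩ (dvd_pow_self 2 (by omega : k - 1 ≠ 0))
          · push_cast
            exact ⟨1, by ring⟩
        have hsplit : 2^β = 2^(β-(k-1)) * 2^(k-1) := by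
          rw [← pow_add]; congr 1; omega
        have hcard := two_roots_two k m1 n1 hk3 hpm1 hpn1 ⟨x, by exact_mod_cast hx⟩
        have hcard' : ((range (2^(k-1))).filter
            (fun b : ℕ => ((2:ℕ):ℤ)^k ∣ (b:ℤ)^2*(m1:ℤ)+(n1:ℤ))).card = 2 := by
          have he : (range (2^(k-1))).filter
              (fun b : ℕ => ((2:ℕ):ℤ)^k ∣ (b:ℤ)^2*(m1:ℤ)+(n1:ℤ))
              = (range (2^(k-1))).filter
              (fun b : ℕ => (2:ℤ)^k ∣ (b:ℤ)^2*(m1:ℤ)+(n1:ℤ)) := by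
            apply Finset.filter_congr
            intro b _
            norm_num
          rw [he]; exact hcard
        rw [hcnt, hsplit, count_periodic (2^(k-1)) _ hper (2^(β-(k-1))), hcard']
        rw [← pow_succ]
        congr 1
        omega
    · -- p odd
      rw [if_neg hp2, if_neg hT]
      have hcopp2 : Nat.Coprime p 2 :=
        (Nat.coprime_primes hp Nat.prime_two).mpr hp2
      have hβa : β ≤ a := by
        have h8 : p^β ∣ mt := (hcopp2.pow_left β).dvd_of_dvd_mul_left hdm
        exact (Nat.Prime.pow_dvd_iff_le_factorization hp hmt.ne').mp h8
      have hβc : β ≤ c := by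
        have h8 : p^β ∣ n := (hcopp2.pow_left β).dvd_of_dvd_mul_left hdn
        exact (Nat.Prime.pow_dvd_iff_le_factorization hp hn.ne').mp h8
      have hkβ : k ≤ β := by omega
      have hper : ∀ b : ℕ,
          ((p:ℤ)^k ∣ ((b + p^k : ℕ):ℤ)^2*m1+n1 ↔ (p:ℤ)^k ∣ (b:ℤ)^2*m1+n1) := by
        intro b
        apply sq_cong _ _ _ _ _ ?_
        push_cast
        exact ⟨1, by ring⟩
      have hsplit : p^β = p^(β-k) * p^k := by
        rw [← pow_add]; congr 1; omega
      rw [hcnt, hsplit,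
        count_periodic (p^k) _ hper (p^(β-k)),
        two_roots_odd p k m1 n1 hp hp2 (by omega) hpm1 hpn1 ⟨x, hx⟩]
      have e : β - k = α - β := by omega
      rw [e]; ring
lemma cond_mod (mt n γ : ℕ) (hγ : γ ∣ 2 * mt) (b b' : ℕ) (h : b ≡ b' [MOD γ]) :
    ((Nat.gcd b γ = 1 ∧ (γ : ℤ) ^ 2 ∣ (b : ℤ) ^ 2 * mt + n) →
     (Nat.gcd b' γ = 1 ∧ (γ : ℤ) ^ 2 ∣ (b' : ℤ) ^ 2 * mt + n)) := by
  rintro ⟨h1, h2⟩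
  refine ⟨h.gcd_eq ▸ h1, ?_⟩
  have hdz : (γ:ℤ) ∣ (b':ℤ) - b := Nat.ModEq.dvd h
  obtain ⟨t, ht⟩ := hdz
  have h2mt : (γ:ℤ) ∣ 2 * mt := by exact_mod_cast Int.natCast_dvd_natCast.mpr hγ
  obtain ⟨w, hw⟩ := h2mt
  have key : (γ:ℤ)^2 ∣ ((b':ℤ)^2 * mt + n) - ((b:ℤ)^2 * mt + n) := by
    have e : ((b':ℤ)^2 * mt + n) - ((b:ℤ)^2 * mt + n)
        = ((b':ℤ) - b) * ((b':ℤ) - b) * mt + ((b':ℤ) - b) * b * (2 * mt) := by ring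
    rw [e, ht, hw]
    exact ⟨t * t * mt + t * b * w, by ring⟩
  have := dvd_add h2 key
  have e : ((b:ℤ)^2 * mt + n) + (((b':ℤ)^2 * mt + n) - ((b:ℤ)^2 * mt + n))
      = (b':ℤ)^2 * mt + n := by ring
  rwa [e] at this

lemma cnt_mul (mt n γ₁ γ₂ : ℕ) (h1 : 0 < γ₁) (h2 : 0 < γ₂) (hcop : Nat.Coprime γ₁ γ₂)
    (hd1 : γ₁ ∣ 2 * mt) (hd2 : γ₂ ∣ 2 * mt) :
    cnt mt n (γ₁ * γ₂) = cnt mt n γ₁ * cnt mt n γ₂ := by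
  classical
  set C₁ : ℕ → Prop := fun b => Nat.gcd b γ₁ = 1 ∧ (γ₁ : ℤ) ^ 2 ∣ (b : ℤ) ^ 2 * mt + n with hC₁
  set C₂ : ℕ → Prop := fun b => Nat.gcd b γ₂ = 1 ∧ (γ₂ : ℤ) ^ 2 ∣ (b : ℤ) ^ 2 * mt + n with hC₂
  have hsplitC : ∀ b : ℕ,
      ((Nat.gcd b (γ₁ * γ₂) = 1 ∧ ((γ₁ * γ₂ : ℕ) : ℤ) ^ 2 ∣ (b : ℤ) ^ 2 * mt + n)
        ↔ C₁ b ∧ C₂ b) := by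
    intro b
    have hg : Nat.gcd b (γ₁ * γ₂) = 1 ↔ Nat.gcd b γ₁ = 1 ∧ Nat.gcd b γ₂ = 1 :=
      Nat.coprime_mul_iff_right
    have hcz : IsCoprime ((γ₁:ℤ)^2) ((γ₂:ℤ)^2) :=
      ((Nat.isCoprime_iff_coprime.mpr hcop).pow_left).pow_right
    have hd : ((γ₁ * γ₂ : ℕ) : ℤ)^2 ∣ (b : ℤ) ^ 2 * mt + n ↔
        ((γ₁:ℤ)^2 ∣ (b : ℤ) ^ 2 * mt + n ∧ (γ₂:ℤ)^2 ∣ (b : ℤ) ^ 2 * mt + n) := by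
      constructor
      · intro h
        have e : ((γ₁ * γ₂ : ℕ) : ℤ)^2 = (γ₁:ℤ)^2 * (γ₂:ℤ)^2 := by push_cast; ring
        rw [e] at h
        exact ⟨(dvd_mul_right _ _).trans h, (dvd_mul_left _ _).trans h⟩
      · rintro ⟨ha, hb⟩
        have e : ((γ₁ * γ₂ : ℕ) : ℤ)^2 = (γ₁:ℤ)^2 * (γ₂:ℤ)^2 := by push_cast; ring
        rw [e]
        exact hcz.mul_dvd ha hb
    rw [hg, hd, hC₁, hC₂]
    tauto
  unfold cnt
  rw [← Finset.card_product]
  apply Finset.card_bij'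
    (i := fun b _ => (b % γ₁, b % γ₂))
    (j := fun rs _ => (Nat.chineseRemainder hcop rs.1 rs.2).val % (γ₁ * γ₂))
  · -- hi
    intro b hb
    simp only [Finset.mem_filter, Finset.mem_range] at hb
    obtain ⟨hblt, hbC⟩ := hb
    rw [hsplitC b] at hbC
    simp only [Finset.mem_product, Finset.mem_filter, Finset.mem_range]
    refine ⟨⟨Nat.mod_lt b h1, ?_⟩, ⟨Nat.mod_lt b h2, ?_⟩⟩
    · exact cond_mod mt n γ₁ hd1 b (b % γ₁) (Nat.mod_modEq b γ₁).symm hbC.1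
    · exact cond_mod mt n γ₂ hd2 b (b % γ₂) (Nat.mod_modEq b γ₂).symm hbC.2
  · -- hj
    intro rs hrs
    simp only [Finset.mem_product, Finset.mem_filter, Finset.mem_range] at hrs
    obtain ⟨⟨hr1, hrC1⟩, ⟨hr2, hrC2⟩⟩ := hrs
    set K := (Nat.chineseRemainder hcop rs.1 rs.2).val with hK
    have hKp := (Nat.chineseRemainder hcop rs.1 rs.2).property
    simp only [Finset.mem_filter, Finset.mem_range]
    have hmod1 : K % (γ₁ * γ₂) ≡ rs.1 [MOD γ₁] :=
      ((Nat.mod_modEq K (γ₁ * γ₂)).of_dvd (dvd_mul_right _ _)).trans hKp.1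
    have hmod2 : K % (γ₁ * γ₂) ≡ rs.2 [MOD γ₂] :=
      ((Nat.mod_modEq K (γ₁ * γ₂)).of_dvd (dvd_mul_left _ _)).trans hKp.2
    refine ⟨Nat.mod_lt K (by positivity), ?_⟩
    rw [hsplitC]
    exact ⟨cond_mod mt n γ₁ hd1 rs.1 _ hmod1.symm hrC1,
      cond_mod mt n γ₂ hd2 rs.2 _ hmod2.symm hrC2⟩
  · -- left inverse
    intro b hb
    simp only [Finset.mem_filter, Finset.mem_range] at hb
    have hKp := (Nat.chineseRemainder hcop (b % γ₁) (b % γ₂)).property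
    set K := (Nat.chineseRemainder hcop (b % γ₁) (b % γ₂)).val with hK
    have hmod1 : K ≡ b [MOD γ₁] := hKp.1.trans (Nat.mod_modEq b γ₁)
    have hmod2 : K ≡ b [MOD γ₂] := hKp.2.trans (Nat.mod_modEq b γ₂)
    have hmod : K ≡ b [MOD γ₁ * γ₂] :=
      (Nat.modEq_and_modEq_iff_modEq_mul hcop).mp ⟨hmod1, hmod2⟩
    have : K % (γ₁ * γ₂) ≡ b [MOD γ₁ * γ₂] := (Nat.mod_modEq K _).trans hmod
    exact this.eq_of_lt_of_lt (Nat.mod_lt K (by positivity)) hb.1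
  · -- right inverse
    intro rs hrs
    simp only [Finset.mem_product, Finset.mem_filter, Finset.mem_range] at hrs
    have hKp := (Nat.chineseRemainder hcop rs.1 rs.2).property
    set K := (Nat.chineseRemainder hcop rs.1 rs.2).val with hK
    have hmod1 : K % (γ₁ * γ₂) ≡ rs.1 [MOD γ₁] :=
      ((Nat.mod_modEq K (γ₁ * γ₂)).of_dvd (dvd_mul_right _ _)).trans hKp.1
    have hmod2 : K % (γ₁ * γ₂) ≡ rs.2 [MOD γ₂] :=
      ((Nat.mod_modEq K (γ₁ * γ₂)).of_dvd (dvd_mul_left _ _)).trans hKp.2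
    have e1 : K % (γ₁ * γ₂) % γ₁ = rs.1 := by
      have : K % (γ₁ * γ₂) % γ₁ ≡ rs.1 [MOD γ₁] :=
        (Nat.mod_modEq _ γ₁).trans hmod1
      exact this.eq_of_lt_of_lt (Nat.mod_lt _ h1) hrs.1.1
    have e2 : K % (γ₁ * γ₂) % γ₂ = rs.2 := by
      have : K % (γ₁ * γ₂) % γ₂ ≡ rs.2 [MOD γ₂] :=
        (Nat.mod_modEq _ γ₂).trans hmod2
      exact this.eq_of_lt_of_lt (Nat.mod_lt _ h2) hrs.2.1
    exact Prod.ext e1 e2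
def HEX (mt n γ p : ℕ) : Prop :=
  ((mt.factorization p ≠ n.factorization p ∧
      2 * γ.factorization p ≤ min (mt.factorization p) (n.factorization p)) ∨
   (mt.factorization p = n.factorization p ∧
      (2 * γ.factorization p ≤ min (mt.factorization p) (n.factorization p) ∨
       (2 * γ.factorization p > min (mt.factorization p) (n.factorization p) ∧
        ∃ x : ℤ,
          (p : ℤ) ^ (2 * γ.factorization p
              - min (mt.factorization p) (n.factorization p)) ∣
            x ^ 2 * ((mt / p ^ min (mt.factorization p) (n.factorization p) : ℕ) : ℤ)
              + ((n / p ^ min (mt.factorization p) (n.factorization p) : ℕ) : ℤ)))))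

def Mfun (mt n γ p : ℕ) : ℕ :=
  if p = 2 then
    (if 2 * γ.factorization 2 ≤ min (mt.factorization 2) (n.factorization 2) + 2
      then 2 ^ (γ.factorization 2 - 1)
      else 2 ^ (min (mt.factorization 2) (n.factorization 2) + 2 - γ.factorization 2))
  else
    (if 2 * γ.factorization p ≤ min (mt.factorization p) (n.factorization p)
      then (p - 1) * p ^ (γ.factorization p - 1)
      else 2 * p ^ (min (mt.factorization p) (n.factorization p) - γ.factorization p))

lemma bridge (mt n γ p : ℕ) :
    (if p = 2 then
      (if 2 * γ.factorization p ≤ min (mt.factorization 2) (n.factorization 2) + 2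
        then 2 ^ (γ.factorization p - 1)
        else 2 ^ (min (mt.factorization 2) (n.factorization 2) + 2 - γ.factorization p))
     else
      (if 2 * γ.factorization p ≤ min (mt.factorization p) (n.factorization p)
        then (p - 1) * p ^ (γ.factorization p - 1)
        else 2 * p ^ (min (mt.factorization p) (n.factorization p) - γ.factorization p)))
    = Mfun mt n γ p := by
  unfold Mfun
  by_cases hp2 : p = 2 <;> simp [hp2]

lemma cnt_formula (mt n : ℕ) (hmt : 0 < mt) (hn : 0 < n) :
    ∀ γ : ℕ, 0 < γ → γ ∣ Nat.gcd (2 * mt) (2 * n) →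
    (∀ p : ℕ, p.Prime → p ∣ γ → HEX mt n γ p) →
    cnt mt n γ = ∏ p ∈ γ.primeFactors, Mfun mt n γ p := by
  intro γ
  induction γ using Nat.strong_induction_on with
  | _ γ ih =>
  intro hγ hdvd hex
  by_cases hγ1 : γ = 1
  · subst hγ1
    unfold cnt
    simp
  · set p := γ.minFac with hpdef
    have hp : p.Prime := Nat.minFac_prime hγ1
    have hpγ : p ∣ γ := Nat.minFac_dvd γ
    set β := γ.factorization p with hβdef
    have hβ : 0 < β := hp.factorization_pos_of_dvd hγ.ne' hpγ
    set γ' := γ / p ^ β with hγ'def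
    have heq : p ^ β * γ' = γ := Nat.ordProj_mul_ordCompl_eq_self γ p
    have hγ'pos : 0 < γ' := Nat.ordCompl_pos p hγ.ne'
    have hpγ' : ¬ p ∣ γ' := Nat.not_dvd_ordCompl hp hγ.ne'
    have hcop : Nat.Coprime (p ^ β) γ' := (Nat.coprime_ordCompl hp hγ.ne').pow_left β
    have hγ'γ : γ' ∣ γ := Dvd.intro_left _ heq
    have hγ'lt : γ' < γ := by
      have hpow : 1 < p ^ β := Nat.one_lt_pow hβ.ne' hp.one_lt
      have h := (Nat.lt_mul_iff_one_lt_left hγ'pos).mpr hpow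
      rwa [heq] at h
    have hd2mt : γ ∣ 2 * mt := hdvd.trans (Nat.gcd_dvd_left _ _)
    have hdpp : p ^ β ∣ γ := Dvd.intro _ heq
    have hc : cnt mt n γ = cnt mt n (p ^ β) * cnt mt n γ' := by
      conv_lhs => rw [← heq]
      exact cnt_mul mt n (p ^ β) γ' (pow_pos hp.pos β) hγ'pos hcop
        (hdpp.trans hd2mt) (hγ'γ.trans hd2mt)
    have hexp := hex p hp hpγ
    unfold HEX at hexp
    have hpp := cnt_pp mt n p β hmt hn hp hβ (hdpp.trans hdvd) hexp
    have hpf : γ.primeFactors = {p} ∪ γ'.primeFactors := by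
      conv_lhs => rw [← heq]
      rw [Nat.primeFactors_mul (pow_ne_zero β hp.pos.ne') hγ'pos.ne',
        Nat.primeFactors_prime_pow hβ.ne' hp]
    have hdisj : Disjoint ({p} : Finset ℕ) γ'.primeFactors :=
      Finset.disjoint_singleton_left.mpr
        (fun hmem => hpγ' (Nat.dvd_of_mem_primeFactors hmem))
    rw [hc, hpf, Finset.prod_union hdisj, Finset.prod_singleton]
    congr 1
    · rw [hpp]
      exact bridge mt n γ p
    · have hex' : ∀ q : ℕ, q.Prime → q ∣ γ' → HEX mt n γ' q := by
        intro q hq hqγ'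
        have hqp : q ≠ p := fun h => hpγ' (h ▸ hqγ')
        have hfq : γ'.factorization q = γ.factorization q := by
          rw [hγ'def, hβdef, Nat.factorization_ordCompl]
          exact Finsupp.erase_ne hqp
        unfold HEX
        rw [hfq]
        exact hex q hq (hqγ'.trans hγ'γ)
      rw [ih γ' hγ'lt hγ'pos (hγ'γ.trans hdvd) hex']
      apply Finset.prod_congr rfl
      intro q hq
      have hq2 : q ∣ γ' := Nat.dvd_of_mem_primeFactors hq
      have hqp : q ≠ p := fun h => hpγ' (h ▸ hq2)
      have hfq : γ'.factorization q = γ.factorization q := by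
        rw [hγ'def, hβdef, Nat.factorization_ordCompl]
        exact Finsupp.erase_ne hqp
      unfold Mfun
      by_cases hq2' : q = 2
      · subst hq2'
        rw [if_pos rfl, if_pos rfl, hfq]
      · rw [if_neg hq2', if_neg hq2', hfq]



/-- Proposition 3.5 (counting part): under the existence conditions, the number of
residues `b` modulo `γ` coprime to `γ` with `γ² ∣ b²m̃ + n` equals `∏_{p ∣ γ} M_p`,
where for odd `p` (with `β = v_p(γ)`, `α = min(v_p(m̃), v_p(n))`)
`M_p = (p−1)p^{β−1}` if `β ≤ α/2` and `M_p = 2p^{α−β}` otherwise, and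
`M_2 = 2^{β−1}` if `β ≤ α/2 + 1` and `M_2 = 2^{α+2−β}` otherwise.
Here `mt` plays the role of `m̃`. -/
theorem stmt_19 (mt n γ : ℕ) (hmt : 0 < mt) (hn : 0 < n) (hγ : 0 < γ)
    (hdvd : γ ∣ Nat.gcd (2 * mt) (2 * n))
    (hex : ∀ p : ℕ, p.Prime → p ∣ γ →
      ((mt.factorization p ≠ n.factorization p ∧
          2 * γ.factorization p ≤ min (mt.factorization p) (n.factorization p)) ∨
       (mt.factorization p = n.factorization p ∧
          (2 * γ.factorization p ≤ min (mt.factorization p) (n.factorization p) ∨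
           (2 * γ.factorization p > min (mt.factorization p) (n.factorization p) ∧
            ∃ x : ℤ,
              (p : ℤ) ^ (2 * γ.factorization p
                  - min (mt.factorization p) (n.factorization p)) ∣
                x ^ 2 * ((mt / p ^ min (mt.factorization p) (n.factorization p) : ℕ) : ℤ)
                  + ((n / p ^ min (mt.factorization p) (n.factorization p) : ℕ) : ℤ)))))) :
    ((Finset.range γ).filter
        (fun b : ℕ => Nat.gcd b γ = 1 ∧ (γ : ℤ) ^ 2 ∣ (b : ℤ) ^ 2 * mt + n)).card
      = ∏ p ∈ γ.primeFactors,
          (if p = 2 then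
            (if 2 * γ.factorization 2 ≤ min (mt.factorization 2) (n.factorization 2) + 2
              then 2 ^ (γ.factorization 2 - 1)
              else 2 ^ (min (mt.factorization 2) (n.factorization 2) + 2
                - γ.factorization 2))
           else
            (if 2 * γ.factorization p ≤ min (mt.factorization p) (n.factorization p)
              then (p - 1) * p ^ (γ.factorization p - 1)
              else 2 * p ^ (min (mt.factorization p) (n.factorization p)
                - γ.factorization p))) := by
  have h := cnt_formula mt n hmt hn γ hγ hdvd (fun p a b => hex p a b)
  exact h
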